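/- arXiv:math/0703899 — 2 statements merged into one kernel-verified Lean document; each statement's English description precedes it below -/
import Mathlib

section
/- Foster's theorem: Let G be a finite connected simple graph with n vertices and e edges (e ≥ 1), every edge having resistance 1. Then the sum over all edges {u,v} of the effective resistance R(u,v) equals n − 1; equivalently, the average over the edges of G of the effective resistance across the edge is (n−1)/e. -/
variable {V : Type*}

/-- A *flow* on a graph: an antisymmetric function on ordered pairs of vertices
that vanishes on non-adjacent pairs. -/
def IsFlow (G : SimpleGraph V) (θ : V → V → ℝ) : Prop :=
  (∀ u v, θ u v = -θ v u) ∧ ∀ u v, ¬G.Adj u v → θ u v = 0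

/-- The divergence (source strength) of a flow at a vertex. -/
noncomputable def divg (G : SimpleGraph V) [G.LocallyFinite] (θ : V → V → ℝ) (v : V) : ℝ :=
  ∑ u ∈ G.neighborFinset v, θ v u

open Classical in
/-- The source distribution with a unit source at `p` and a unit sink at `q`. -/
noncomputable def pointSource (p q v : V) : ℝ :=
  if v = p then 1 else if v = q then -1 else 0

open Classical in
/-- The energy `(1/2) ∑_{(u,v) adjacent} θ(u,v)²` of a flow in a finite graph with unit
resistances. -/
noncomputable def energyFin (G : SimpleGraph V) [Fintype V] (θ : V → V → ℝ) : ℝ :=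
  2⁻¹ * ∑ x : V × V, if G.Adj x.1 x.2 then θ x.1 x.2 ^ 2 else 0

open Classical in
/-- The effective resistance between `p` and `q` in a finite graph with unit resistances:
the minimum of the energy over all unit flows from `p` to `q`. -/
noncomputable def effRes (G : SimpleGraph V) [Fintype V] (p q : V) : ℝ :=
  sInf {x | ∃ θ, IsFlow G θ ∧ divg G θ = pointSource p q ∧ x = energyFin G θ}

open Classical

lemma resSet_swap (G : SimpleGraph V) [Fintype V] {p q : V} (hpq : p ≠ q) {x : ℝ}
    (h : x ∈ {x | ∃ θ, IsFlow G θ ∧ divg G θ = pointSource p q ∧ x = energyFin G θ}) :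
    x ∈ {x | ∃ θ, IsFlow G θ ∧ divg G θ = pointSource q p ∧ x = energyFin G θ} := by
  obtain ⟨θ, hθ, hd, rfl⟩ := h
  refine ⟨fun a b => -θ a b, ⟨fun a b => ?_, fun a b hab => ?_⟩, ?_, ?_⟩
  · show -θ a b = -(-θ b a)
    rw [← hθ.1 a b]
  · show -θ a b = 0
    rw [hθ.2 a b hab, neg_zero]
  · funext w
    have hneg : divg G (fun a b => -θ a b) w = -divg G θ w := by
      simp [divg]
    rw [hneg]
    have := congrFun hd w
    rw [this]
    unfold pointSource
    rcases eq_or_ne w p with rfl | h1 <;> rcases eq_or_ne w q with rfl | h2 <;>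
      simp_all
  · unfold energyFin
    congr 1
    refine Finset.sum_congr rfl fun x _ => ?_
    simp [neg_sq]

lemma effRes_symm (G : SimpleGraph V) [Fintype V] (p q : V) :
    effRes G p q = effRes G q p := by
  rcases eq_or_ne p q with rfl | hpq
  · rfl
  unfold effRes
  congr 1
  ext x
  exact ⟨fun h => resSet_swap G hpq h, fun h => resSet_swap G hpq.symm h⟩

/-- The effective resistance as a function of an unordered edge. -/
noncomputable def effResSym (G : SimpleGraph V) [Fintype V] : Sym2 V → ℝ :=
  Sym2.lift ⟨fun u v => effRes G u v, fun u v => effRes_symm G u v⟩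


section FosterAux

open Finset Matrix

variable [Fintype V]

/-- The matrix all of whose entries are `1/n`. -/
noncomputable def avgMatrix (V : Type*) [Fintype V] : Matrix V V ℝ :=
  Matrix.of fun _ _ => (Fintype.card V : ℝ)⁻¹

/-- A concrete "pseudoinverse" of the Laplacian: `(L + J/n)⁻¹`. -/
noncomputable def fosterM (G : SimpleGraph V) [Fintype V] : Matrix V V ℝ :=
  (G.lapMatrix ℝ + avgMatrix V)⁻¹

lemma avg_mulVec (z : V → ℝ) (i : V) :
    (avgMatrix V *ᵥ z) i = (Fintype.card V : ℝ)⁻¹ * ∑ j, z j := by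
  simp [avgMatrix, mulVec, dotProduct, Finset.mul_sum]

lemma isUnit_lap_add_avg (G : SimpleGraph V) (hconn : G.Connected) :
    IsUnit (G.lapMatrix ℝ + avgMatrix V) := by
  have : Nonempty V := hconn.nonempty
  have hn : (Fintype.card V : ℝ) ≠ 0 := by
    exact_mod_cast Fintype.card_ne_zero
  rw [← Matrix.mulVec_injective_iff_isUnit]
  intro x y hxy
  have hz : (G.lapMatrix ℝ + avgMatrix V) *ᵥ (x - y) = 0 := by
    rw [mulVec_sub, hxy, sub_self]
  set z := x - y with hzdef
  have h0 : z ⬝ᵥ ((G.lapMatrix ℝ) *ᵥ z) + z ⬝ᵥ (avgMatrix V *ᵥ z) = 0 := by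
    rw [← dotProduct_add, ← add_mulVec, hz, dotProduct_zero]
  have h1 : 0 ≤ z ⬝ᵥ ((G.lapMatrix ℝ) *ᵥ z) := by
    simpa using (SimpleGraph.posSemidef_lapMatrix ℝ G).dotProduct_mulVec_nonneg z
  have havg : z ⬝ᵥ (avgMatrix V *ᵥ z) = (Fintype.card V : ℝ)⁻¹ * (∑ j, z j) ^ 2 := by
    simp only [dotProduct, avg_mulVec]
    rw [← Finset.sum_mul]
    ring
  have h2 : 0 ≤ z ⬝ᵥ (avgMatrix V *ᵥ z) := by
    rw [havg]; positivity
  have hL0 : z ⬝ᵥ ((G.lapMatrix ℝ) *ᵥ z) = 0 := le_antisymm (by linarith) h1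
  have hA0 : z ⬝ᵥ (avgMatrix V *ᵥ z) = 0 := by linarith
  have hconst : ∀ i j : V, z i = z j := by
    have := (G.lapMatrix_toLinearMap₂'_apply'_eq_zero_iff_forall_reachable z).mp
      (by rw [Matrix.toLinearMap₂'_apply']; exact hL0)
    exact fun i j => this i j (hconn i j)
  have hsum : ∑ j, z j = 0 := by
    rw [havg] at hA0
    rcases mul_eq_zero.mp hA0 with h | h
    · exact absurd h (by simpa using hn)
    · exact pow_eq_zero_iff (by norm_num) |>.mp h
  have hz0 : z = 0 := by
    funext i
    have : ∑ j, z j = (Fintype.card V : ℝ) * z i := by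
      rw [Finset.sum_congr rfl fun j _ => hconst j i]
      simp [mul_comm]
    rw [this] at hsum
    simpa [hn] using mul_eq_zero.mp hsum
  exact sub_eq_zero.mp hz0

lemma lap_row_sum (G : SimpleGraph V) (j : V) : ∑ k, G.lapMatrix ℝ k j = 0 := by
  have hcol : ∀ k, G.lapMatrix ℝ k j = G.lapMatrix ℝ j k := by
    have hs : (G.lapMatrix ℝ)ᵀ = G.lapMatrix ℝ := G.isSymm_lapMatrix ℝ
    intro k
    conv_lhs => rw [← hs]
    rfl
  rw [Finset.sum_congr rfl fun k _ => hcol k]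
  have := congrFun (SimpleGraph.lapMatrix_mulVec_const_eq_zero G (R := ℝ)) j
  simpa [mulVec, dotProduct] using this

lemma avg_mul_lap (G : SimpleGraph V) : avgMatrix V * G.lapMatrix ℝ = 0 := by
  ext i j
  simp only [Matrix.mul_apply, avgMatrix, Matrix.of_apply, Matrix.zero_apply]
  rw [← Finset.mul_sum, lap_row_sum, mul_zero]

lemma avg_mul_avg (hne : Nonempty V) :
    (avgMatrix V : Matrix V V ℝ) * avgMatrix V = avgMatrix V := by
  have hn : (Fintype.card V : ℝ) ≠ 0 := by exact_mod_cast Fintype.card_ne_zero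
  ext i j
  simp only [Matrix.mul_apply, avgMatrix, Matrix.of_apply]
  rw [Finset.sum_const, Finset.card_univ, nsmul_eq_mul]
  field_simp

lemma lap_mul_fosterM (G : SimpleGraph V) (hconn : G.Connected) :
    G.lapMatrix ℝ * fosterM G = 1 - avgMatrix V := by
  have : Nonempty V := hconn.nonempty
  have hU := isUnit_lap_add_avg G hconn
  have hNM : (G.lapMatrix ℝ + avgMatrix V) * fosterM G = 1 :=
    Matrix.mul_nonsing_inv _ ((Matrix.isUnit_iff_isUnit_det _).mp hU)
  have hAM : avgMatrix V * fosterM G = avgMatrix V := by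
    have h1 : avgMatrix V * (G.lapMatrix ℝ + avgMatrix V) = avgMatrix V := by
      rw [Matrix.mul_add, avg_mul_lap, avg_mul_avg this, zero_add]
    calc avgMatrix V * fosterM G
        = (avgMatrix V * (G.lapMatrix ℝ + avgMatrix V)) * fosterM G := by rw [h1]
      _ = avgMatrix V * ((G.lapMatrix ℝ + avgMatrix V) * fosterM G) := by
          rw [Matrix.mul_assoc]
      _ = avgMatrix V := by rw [hNM, Matrix.mul_one]
  have hadd : (G.lapMatrix ℝ + avgMatrix V) * fosterM G =
      G.lapMatrix ℝ * fosterM G + avgMatrix V * fosterM G := Matrix.add_mul _ _ _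
  rw [hNM, hAM] at hadd
  linear_combination (norm := abel) hadd.symm

/-- Sum of an `ite` over the adjacency relation equals the divergence. -/
lemma sum_ite_adj_eq_divg (G : SimpleGraph V) (η : V → V → ℝ) (u : V) :
    ∑ v : V, (if G.Adj u v then η u v else 0) = divg G η u := by
  rw [divg, SimpleGraph.neighborFinset_eq_filter, Finset.sum_filter]

lemma sum_pointSource_mul {p q : V} (hpq : p ≠ q) (g : V → ℝ) :
    ∑ v : V, g v * pointSource p q v = g p - g q := by
  have h : ∀ v, g v * pointSource p q v =
      (if v = p then g v else 0) - (if v = q then g v else 0) := by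
    intro v
    unfold pointSource
    split_ifs with h1 h2 <;> first
      | (exfalso; exact hpq (h1 ▸ h2 ▸ rfl))
      | ring
  rw [Finset.sum_congr rfl fun v _ => h v, Finset.sum_sub_distrib]
  simp

lemma cross_zero (G : SimpleGraph V) (φ : V → ℝ) (η : V → V → ℝ)
    (hanti : ∀ u v, η u v = -η v u) (hdiv : ∀ u, divg G η u = 0) :
    ∑ x : V × V, (if G.Adj x.1 x.2 then (φ x.1 - φ x.2) * η x.1 x.2 else 0) = 0 := by
  rw [Fintype.sum_prod_type]
  have hsplit : ∀ u v : V, (if G.Adj u v then (φ u - φ v) * η u v else 0) =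
      (if G.Adj u v then φ u * η u v else 0) - (if G.Adj u v then φ v * η u v else 0) := by
    intro u v; split_ifs <;> ring
  simp_rw [hsplit, Finset.sum_sub_distrib]
  have hA : ∀ u : V, ∑ v : V, (if G.Adj u v then φ u * η u v else 0) = 0 := by
    intro u
    have : ∀ v : V, (if G.Adj u v then φ u * η u v else 0) =
        φ u * (if G.Adj u v then η u v else 0) := by intro v; split_ifs <;> ring
    rw [Finset.sum_congr rfl fun v _ => this v, ← Finset.mul_sum,
      sum_ite_adj_eq_divg, hdiv, mul_zero]
  have hB : ∑ u : V, ∑ v : V, (if G.Adj u v then φ v * η u v else 0) = 0 := by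
    rw [Finset.sum_comm]
    refine Finset.sum_eq_zero fun v _ => ?_
    have : ∀ u : V, (if G.Adj u v then φ v * η u v else 0) =
        -(φ v * (if G.Adj v u then η v u else 0)) := by
      intro u
      rw [G.adj_comm u v]
      split_ifs with h
      · rw [hanti u v]; ring
      · ring
    rw [Finset.sum_congr rfl fun u _ => this u]
    rw [Finset.sum_neg_distrib, ← Finset.mul_sum, sum_ite_adj_eq_divg, hdiv,
      mul_zero, neg_zero]
  rw [Finset.sum_congr rfl fun u _ => hA u, hB]
  simp

lemma sum_ite_adj_const (G : SimpleGraph V) (u : V) (c : ℝ) :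
    ∑ v : V, (if G.Adj u v then c else 0) = (G.degree u : ℝ) * c := by
  rw [SimpleGraph.degree_eq_sum_if_adj G u (R := ℝ), Finset.sum_mul]
  refine Finset.sum_congr rfl fun v _ => ?_
  split_ifs <;> ring

lemma effRes_eq_fosterM (G : SimpleGraph V) (hconn : G.Connected) {p q : V} (hpq : p ≠ q) :
    effRes G p q = fosterM G p p + fosterM G q q - fosterM G p q - fosterM G q p := by
  set M := fosterM G with hM
  set f : V → ℝ := pointSource p q with hf
  set φ : V → ℝ := M *ᵥ f with hφ
  set θstar : V → V → ℝ := fun u v => if G.Adj u v then φ u - φ v else 0 with hθstar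
  have hsumf : ∑ v, f v = 0 := by
    have := sum_pointSource_mul hpq (fun _ => (1 : ℝ))
    simpa using this
  have hLφ : G.lapMatrix ℝ *ᵥ φ = f := by
    rw [hφ, mulVec_mulVec, lap_mul_fosterM G hconn, sub_mulVec, one_mulVec]
    funext i
    rw [Pi.sub_apply, avg_mulVec, hsumf, mul_zero, sub_zero]
  have hflow : IsFlow G θstar := by
    constructor
    · intro u v
      by_cases h : G.Adj u v
      · simp only [hθstar, if_pos h, if_pos h.symm]; ring
      · have h' : ¬ G.Adj v u := fun hh => h hh.symm
        simp [hθstar, h, h']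
    · intro u v h; simp [hθstar, h]
  have hdivθ : divg G θstar = f := by
    funext v
    rw [← sum_ite_adj_eq_divg]
    have hsplit : ∀ u : V, (if G.Adj v u then θstar v u else 0) =
        (if G.Adj v u then φ v else 0) - (if G.Adj v u then φ u else 0) := by
      intro u; simp only [hθstar]; split_ifs <;> ring
    rw [Finset.sum_congr rfl fun u _ => hsplit u, Finset.sum_sub_distrib,
      sum_ite_adj_const]
    have h3 : ∑ x : V, (if G.Adj v x then φ x else 0) = ∑ u ∈ G.neighborFinset v, φ u := by
      rw [SimpleGraph.neighborFinset_eq_filter, Finset.sum_filter]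
    have := congrFun hLφ v
    rw [SimpleGraph.lapMatrix_mulVec_apply] at this
    rw [h3]
    exact this
  have hEstar : energyFin G θstar = φ ⬝ᵥ f := by
    have h1 : energyFin G θstar =
        2⁻¹ * ∑ x : V × V, (if G.Adj x.1 x.2 then (φ x.1 - φ x.2) ^ 2 else 0) := by
      unfold energyFin
      congr 1
      refine Finset.sum_congr rfl fun x _ => ?_
      by_cases h : G.Adj x.1 x.2 <;> simp [hθstar, h]
    rw [h1]
    have h2 := SimpleGraph.lapMatrix_toLinearMap₂' ℝ G φ
    rw [Matrix.toLinearMap₂'_apply'] at h2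
    rw [Fintype.sum_prod_type]
    rw [show (2:ℝ)⁻¹ * (∑ i : V, ∑ j : V, if G.Adj i j then (φ i - φ j) ^ 2 else 0) =
      (∑ i : V, ∑ j : V, if G.Adj i j then (φ i - φ j) ^ 2 else 0) / 2 by ring, ← h2, hLφ]
  have hφp : φ p = M p p - M p q := by
    rw [hφ]; exact sum_pointSource_mul hpq (fun v => M p v)
  have hφq : φ q = M q p - M q q := by
    rw [hφ]; exact sum_pointSource_mul hpq (fun v => M q v)
  have hE0 : energyFin G θstar = M p p + M q q - M p q - M q p := by
    rw [hEstar]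
    have : φ ⬝ᵥ f = φ p - φ q := sum_pointSource_mul hpq φ
    rw [this, hφp, hφq]; ring
  have hlb : ∀ x ∈ {x | ∃ θ, IsFlow G θ ∧ divg G θ = pointSource p q ∧ x = energyFin G θ},
      M p p + M q q - M p q - M q p ≤ x := by
    rintro x ⟨θ, hθflow, hθdiv, rfl⟩
    set η : V → V → ℝ := fun u v => θ u v - θstar u v with hη
    have hηanti : ∀ u v, η u v = -η v u := by
      intro u v; simp only [hη]; rw [hθflow.1 u v, hflow.1 u v]; ring
    have hηdiv : ∀ u, divg G η u = 0 := by
      intro u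
      have : divg G η u = divg G θ u - divg G θstar u := by
        simp only [divg, hη, Finset.sum_sub_distrib]
      rw [this, hθdiv, hdivθ, sub_self]
    have hS := cross_zero G φ η hηanti hηdiv
    have hpt : ∀ x : V × V, (if G.Adj x.1 x.2 then θ x.1 x.2 ^ 2 else 0) =
        (if G.Adj x.1 x.2 then θstar x.1 x.2 ^ 2 else 0) +
        (if G.Adj x.1 x.2 then η x.1 x.2 ^ 2 else 0) +
        2 * (if G.Adj x.1 x.2 then (φ x.1 - φ x.2) * η x.1 x.2 else 0) := by
      intro x
      by_cases h : G.Adj x.1 x.2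
      · simp only [if_pos h]
        have h1 : θstar x.1 x.2 = φ x.1 - φ x.2 := if_pos h
        have h2 : θ x.1 x.2 = θstar x.1 x.2 + η x.1 x.2 := by simp [hη]
        rw [h2, h1]; ring
      · simp [h]
    have hsum : ∑ x : V × V, (if G.Adj x.1 x.2 then θ x.1 x.2 ^ 2 else 0) =
        (∑ x : V × V, (if G.Adj x.1 x.2 then θstar x.1 x.2 ^ 2 else 0)) +
        (∑ x : V × V, (if G.Adj x.1 x.2 then η x.1 x.2 ^ 2 else 0)) := by
      rw [Finset.sum_congr rfl fun x _ => hpt x, Finset.sum_add_distrib,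
        Finset.sum_add_distrib, ← Finset.mul_sum, hS, mul_zero, add_zero]
    have hEθ : energyFin G θ = energyFin G θstar + energyFin G η := by
      unfold energyFin; rw [hsum]; ring
    have hEη : 0 ≤ energyFin G η := by
      unfold energyFin
      have : (0:ℝ) ≤ ∑ x : V × V, (if G.Adj x.1 x.2 then η x.1 x.2 ^ 2 else 0) := by
        refine Finset.sum_nonneg fun x _ => ?_
        split_ifs <;> positivity
      positivity
    rw [← hE0, hEθ]
    linarith
  have hmem : M p p + M q q - M p q - M q p ∈
      {x | ∃ θ, IsFlow G θ ∧ divg G θ = pointSource p q ∧ x = energyFin G θ} :=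
    ⟨θstar, hflow, hdivθ, hE0.symm⟩
  exact IsLeast.csInf_eq ⟨hmem, hlb⟩

lemma two_mul_sum_edges (G : SimpleGraph V) (F : Sym2 V → ℝ) :
    ∑ d : G.Dart, F d.edge = 2 * ∑ e ∈ G.edgeFinset, F e := by
  rw [← Finset.sum_fiberwise_of_maps_to
    (fun (d : G.Dart) (_ : d ∈ Finset.univ) => SimpleGraph.mem_edgeFinset.mpr d.edge_mem)
    (fun d => F d.edge), Finset.mul_sum]
  refine Finset.sum_congr rfl fun e he => ?_
  have h1 : ∀ d ∈ Finset.univ.filter (fun d : G.Dart => d.edge = e), F d.edge = F e := by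
    intro d hd
    rw [(Finset.mem_filter.mp hd).2]
  rw [Finset.sum_congr rfl h1, Finset.sum_const,
    G.dart_edge_fiber_card e (SimpleGraph.mem_edgeFinset.mp he)]
  ring

lemma sum_darts_eq (G : SimpleGraph V) (F : V → V → ℝ) :
    ∑ d : G.Dart, F d.fst d.snd = ∑ x : V × V, (if G.Adj x.1 x.2 then F x.1 x.2 else 0) := by
  rw [← Finset.sum_filter]
  refine Finset.sum_bij' (fun (d : G.Dart) (_ : d ∈ Finset.univ) => d.toProd)
    (fun (x : V × V) (hx : x ∈ Finset.univ.filter fun x : V × V => G.Adj x.1 x.2) =>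
      SimpleGraph.Dart.mk x (Finset.mem_filter.mp hx).2) ?_ ?_ ?_ ?_ ?_ <;> simp

lemma trace_lap_mul_fosterM (G : SimpleGraph V) (hconn : G.Connected) :
    ∑ u : V, (G.lapMatrix ℝ * fosterM G) u u = (Fintype.card V : ℝ) - 1 := by
  have : Nonempty V := hconn.nonempty
  have hn : (Fintype.card V : ℝ) ≠ 0 := by exact_mod_cast Fintype.card_ne_zero
  rw [lap_mul_fosterM G hconn]
  have h : ∀ u : V, ((1 : Matrix V V ℝ) - avgMatrix V) u u = 1 - (Fintype.card V : ℝ)⁻¹ := by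
    intro u
    rw [Matrix.sub_apply, Matrix.one_apply_eq]
    rfl
  rw [Finset.sum_congr rfl fun u _ => h u, Finset.sum_const, Finset.card_univ, nsmul_eq_mul]
  field_simp

lemma diag_lap_mul (G : SimpleGraph V) (u : V) :
    (G.lapMatrix ℝ * fosterM G) u u =
      (G.degree u : ℝ) * fosterM G u u - ∑ k : V, (if G.Adj u k then fosterM G k u else 0) := by
  rw [Matrix.mul_apply]
  have h : ∀ k : V, G.lapMatrix ℝ u k * fosterM G k u =
      (if u = k then (G.degree u : ℝ) * fosterM G k u else 0) -
      (if G.Adj u k then fosterM G k u else 0) := by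
    intro k
    have hlk : G.lapMatrix ℝ u k =
        (if u = k then (G.degree u : ℝ) else 0) - (if G.Adj u k then 1 else 0) := by
      simp [SimpleGraph.lapMatrix, SimpleGraph.degMatrix, Matrix.sub_apply,
        Matrix.diagonal_apply, SimpleGraph.adjMatrix_apply]
    rw [hlk]
    split_ifs <;> ring
  rw [Finset.sum_congr rfl fun k _ => h k, Finset.sum_sub_distrib, Finset.sum_ite_eq]
  simp

lemma pair_sum_eq (G : SimpleGraph V) :
    ∑ x : V × V, (if G.Adj x.1 x.2 then
        fosterM G x.1 x.1 + fosterM G x.2 x.2 - fosterM G x.1 x.2 - fosterM G x.2 x.1 else 0) =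
      2 * ∑ u : V, (G.lapMatrix ℝ * fosterM G) u u := by
  set M := fosterM G with hM
  have hsplit : ∀ x : V × V, (if G.Adj x.1 x.2 then
      M x.1 x.1 + M x.2 x.2 - M x.1 x.2 - M x.2 x.1 else 0) =
      (if G.Adj x.1 x.2 then M x.1 x.1 else 0) + (if G.Adj x.1 x.2 then M x.2 x.2 else 0)
      - (if G.Adj x.1 x.2 then M x.1 x.2 else 0) - (if G.Adj x.1 x.2 then M x.2 x.1 else 0) := by
    intro x; split_ifs <;> ring
  rw [Finset.sum_congr rfl fun x _ => hsplit x]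
  simp_rw [Finset.sum_sub_distrib, Finset.sum_add_distrib]
  have h1 : ∑ x : V × V, (if G.Adj x.1 x.2 then M x.1 x.1 else 0) =
      ∑ u : V, (G.degree u : ℝ) * M u u := by
    rw [Fintype.sum_prod_type]
    exact Finset.sum_congr rfl fun u _ => sum_ite_adj_const G u (M u u)
  have h2 : ∑ x : V × V, (if G.Adj x.1 x.2 then M x.2 x.2 else 0) =
      ∑ u : V, (G.degree u : ℝ) * M u u := by
    rw [Fintype.sum_prod_type, Finset.sum_comm]
    refine Finset.sum_congr rfl fun v _ => ?_
    have : ∀ u : V, (if G.Adj u v then M v v else 0) = (if G.Adj v u then M v v else 0) := by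
      intro u; rw [G.adj_comm u v]
    rw [Finset.sum_congr rfl fun u _ => this u]
    exact sum_ite_adj_const G v (M v v)
  have h3 : ∑ x : V × V, (if G.Adj x.1 x.2 then M x.1 x.2 else 0) =
      ∑ x : V × V, (if G.Adj x.1 x.2 then M x.2 x.1 else 0) := by
    rw [Fintype.sum_prod_type, Fintype.sum_prod_type, Finset.sum_comm]
    refine Finset.sum_congr rfl fun v _ => Finset.sum_congr rfl fun u _ => ?_
    rw [G.adj_comm u v]
  rw [h1, h2, h3]
  rw [Finset.sum_congr rfl fun u (_ : u ∈ Finset.univ) => diag_lap_mul G u]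
  rw [Finset.sum_sub_distrib]
  have h4 : ∑ x : V × V, (if G.Adj x.1 x.2 then M x.2 x.1 else 0) =
      ∑ u : V, ∑ k : V, (if G.Adj u k then M k u else 0) := Fintype.sum_prod_type _
  rw [h4]
  ring

end FosterAux

open Classical in
/-- **Foster's theorem**: in a finite connected graph with `n` vertices and `e ≥ 1` edges,
all of unit resistance, the sum over the edges of the effective resistance across the edge
is `n - 1`; equivalently, the average of the resistances across the edges is `(n-1)/e`. -/
theorem foster_theorem (G : SimpleGraph V) [Fintype V]
    (hconn : G.Connected) (he : 1 ≤ G.edgeFinset.card) :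
    ∑ e ∈ G.edgeFinset, effResSym G e = (Fintype.card V : ℝ) - 1 ∧
      (∑ e ∈ G.edgeFinset, effResSym G e) / (G.edgeFinset.card : ℝ) =
        ((Fintype.card V : ℝ) - 1) / (G.edgeFinset.card : ℝ) := by
  have hmain : ∑ e ∈ G.edgeFinset, effResSym G e = (Fintype.card V : ℝ) - 1 := by
    have hdart : ∑ d : G.Dart, effResSym G d.edge = 2 * ∑ e ∈ G.edgeFinset, effResSym G e :=
      two_mul_sum_edges G (effResSym G)
    have hdart2 : ∑ d : G.Dart, effResSym G d.edge =
        ∑ d : G.Dart, (fosterM G d.fst d.fst + fosterM G d.snd d.snd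
          - fosterM G d.fst d.snd - fosterM G d.snd d.fst) := by
      refine Finset.sum_congr rfl fun d _ => ?_
      have h1 : effResSym G d.edge = effRes G d.fst d.snd := by
        rcases d with ⟨⟨a, b⟩, hab⟩
        rfl
      rw [h1, effRes_eq_fosterM G hconn (G.ne_of_adj d.adj)]
    have hpair := sum_darts_eq G
      (fun u v => fosterM G u u + fosterM G v v - fosterM G u v - fosterM G v u)
    have h2 : 2 * ∑ e ∈ G.edgeFinset, effResSym G e = 2 * ((Fintype.card V : ℝ) - 1) := by
      rw [← hdart, hdart2, hpair, pair_sum_eq G, trace_lap_mul_fosterM G hconn]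
    exact mul_left_cancel₀ two_ne_zero h2
  exact ⟨hmain, by rw [hmain]⟩
end

section
/- Kirchhoff's rule: Let G be a finite connected simple graph with every edge having resistance 1, and let {u,v} be an edge of G. Then the effective resistance R(u,v) equals the number of spanning trees of G containing the edge {u,v} divided by the total number of spanning trees of G; that is, R(u,v) is the probability that a uniformly random spanning tree of G contains the edge {u,v}. -/
variable {V : Type*}

namespace KirchhoffAux
open Finset SimpleGraph
open Finset SimpleGraph

open Classical in
noncomputable def D (a b : V) : V → ℝ := fun x =>
  (if x = a then 1 else 0) - (if x = b then 1 else 0)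

open Classical in
noncomputable def uflow (a b : V) : V → V → ℝ := fun x y =>
  (if x = a ∧ y = b then (1:ℝ) else 0) - (if x = b ∧ y = a then 1 else 0)

open Classical in
noncomputable def wflow {G : SimpleGraph V} {a b : V} (p : G.Walk a b) : V → V → ℝ := fun x y =>
  (p.darts.countP (fun d => d.toProd = (x, y)) : ℝ) -
  (p.darts.countP (fun d => d.toProd = (y, x)) : ℝ)

lemma wflow_nil {G : SimpleGraph V} {a : V} : wflow (SimpleGraph.Walk.nil : G.Walk a a) = 0 := by
  funext x y; simp [wflow]

lemma wflow_cons {G : SimpleGraph V} {a c b : V} (h : G.Adj a c) (p : G.Walk c b) :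
    wflow (SimpleGraph.Walk.cons h p) = uflow a c + wflow p := by
  classical
  funext x y
  simp only [wflow, SimpleGraph.Walk.darts_cons, List.countP_cons, uflow, Pi.add_apply]
  have h1 : ((SimpleGraph.Dart.mk (a, c) h).toProd = (x, y)) ↔ (x = a ∧ y = c) := by
    constructor
    · intro hh; rw [show x = (x,y).1 from rfl, show y = (x,y).2 from rfl, ← hh]; exact ⟨rfl, rfl⟩
    · rintro ⟨rfl, rfl⟩; rfl
  have h2 : ((SimpleGraph.Dart.mk (a, c) h).toProd = (y, x)) ↔ (x = c ∧ y = a) := by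
    constructor
    · intro hh; rw [show y = (y,x).1 from rfl, show x = (y,x).2 from rfl, ← hh]; exact ⟨rfl, rfl⟩
    · rintro ⟨rfl, rfl⟩; rfl
  have hac : ¬(a = c ∧ c = a) := fun hh => h.ne hh.1
  have hca : ¬(c = a ∧ a = c) := fun hh => h.ne hh.2
  by_cases c1 : x = a ∧ y = c <;> by_cases c2 : x = c ∧ y = a <;>
    simp [h1, h2, c1, c2, hac, hca] <;> push_cast <;> ring

lemma wflow_anti {G : SimpleGraph V} {a b : V} (p : G.Walk a b) (x y : V) :
    wflow p x y = - wflow p y x := by simp [wflow]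

lemma wflow_eq_zero {G : SimpleGraph V} {a b : V} (p : G.Walk a b) {x y : V}
    (h : ¬G.Adj x y) : wflow p x y = 0 := by
  classical
  have key : ∀ u w : V, ¬G.Adj u w → p.darts.countP (fun d => d.toProd = (u, w)) = 0 := by
    intro u w huw
    rw [List.countP_eq_zero]
    rintro ⟨⟨de, df⟩, hadj⟩ _ hd
    simp only [decide_eq_true_eq, Prod.mk.injEq] at hd
    obtain ⟨rfl, rfl⟩ := hd
    exact huw hadj
  rw [wflow, key x y h, key y x fun h' => h h'.symm]
  simp

lemma isFlow_wflow {G T : SimpleGraph V} (hTG : T ≤ G) {a b : V} (p : T.Walk a b) :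
    IsFlow G (wflow p) :=
  ⟨wflow_anti p, fun x y hxy => wflow_eq_zero p fun h => hxy (hTG h)⟩

open Classical in
lemma divg_eq [Fintype V] (G : SimpleGraph V) [G.LocallyFinite] (θ : V → V → ℝ) (x : V) :
    divg G θ x = ∑ y : V, if G.Adj x y then θ x y else 0 := by
  rw [divg, show (∑ y : V, if G.Adj x y then θ x y else 0)
      = ∑ y ∈ Finset.univ.filter (fun y => G.Adj x y), θ x y from (Finset.sum_filter _ _).symm]
  apply Finset.sum_congr
  · ext y; simp [SimpleGraph.mem_neighborFinset]
  · intros; rfl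

lemma divg_add [Fintype V] (G : SimpleGraph V) [G.LocallyFinite] (θ η : V → V → ℝ) :
    divg G (θ + η) = divg G θ + divg G η := by
  funext x
  simp only [divg, Pi.add_apply, Finset.sum_add_distrib]

open Classical in
lemma divg_uflow [Fintype V] (G : SimpleGraph V) [G.LocallyFinite] {a b : V} (h : G.Adj a b) :
    divg G (uflow a b) = D a b := by
  have hab : a ≠ b := h.ne
  funext x
  rw [divg_eq]
  by_cases hxa : x = a
  · subst hxa
    have key : ∀ y, (if G.Adj x y then uflow x b x y else 0) = if y = b then 1 else 0 := by
      intro y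
      by_cases hy : y = b
      · subst hy; simp [uflow, h, hab]
      · simp [uflow, hab, hy]
    rw [Finset.sum_congr rfl fun y _ => key y, Finset.sum_ite_eq' Finset.univ b fun _ => (1:ℝ)]
    simp [D, hab]
  · by_cases hxb : x = b
    · subst hxb
      have key : ∀ y, (if G.Adj x y then uflow a x x y else 0) = if y = a then -1 else 0 := by
        intro y
        by_cases hy : y = a
        · subst hy; simp [uflow, h.symm, hxa, Ne.symm hxa]
        · simp [uflow, hxa, Ne.symm hxa, hy]
      rw [Finset.sum_congr rfl fun y _ => key y,
        Finset.sum_ite_eq' Finset.univ a fun _ => (-1:ℝ)]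
      simp [D, hxa]
    · have key : ∀ y, (if G.Adj x y then uflow a b x y else 0) = 0 := by
        intro y; simp [uflow, hxa, hxb]
      rw [Finset.sum_congr rfl fun y _ => key y]
      simp [D, hxa, hxb]

lemma divg_wflow [Fintype V] {G T : SimpleGraph V} [G.LocallyFinite] (hTG : T ≤ G)
    {a b : V} (p : T.Walk a b) : divg G (wflow p) = D a b := by
  induction p with
  | nil => funext x; simp [wflow_nil, divg, D]
  | cons h q ih =>
    rw [wflow_cons, divg_add, ih, divg_uflow G (hTG h)]
    funext x
    simp only [D, Pi.add_apply]
    ring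


open Classical in
noncomputable def inn (G : SimpleGraph V) [Fintype V] (θ η : V → V → ℝ) : ℝ :=
  ∑ x : V × V, if G.Adj x.1 x.2 then θ x.1 x.2 * η x.1 x.2 else 0

open Classical in
lemma energyFin_eq_inn (G : SimpleGraph V) [Fintype V] (θ : V → V → ℝ) :
    energyFin G θ = 2⁻¹ * inn G θ θ := by
  rw [energyFin, inn]
  congr 1
  apply Finset.sum_congr rfl
  intro x _
  by_cases h : G.Adj x.1 x.2 <;> simp [h, sq]

lemma energyFin_nonneg (G : SimpleGraph V) [Fintype V] (θ : V → V → ℝ) :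
    0 ≤ energyFin G θ := by
  classical
  rw [energyFin]
  have : (0:ℝ) ≤ ∑ x : V × V, if G.Adj x.1 x.2 then θ x.1 x.2 ^ 2 else 0 := by
    apply Finset.sum_nonneg
    intro x _
    by_cases h : G.Adj x.1 x.2 <;> simp [h, sq_nonneg]
  linarith

open Classical in
lemma inn_comm (G : SimpleGraph V) [Fintype V] (θ η : V → V → ℝ) :
    inn G θ η = inn G η θ := by
  rw [inn, inn]; apply Finset.sum_congr rfl; intro x _
  by_cases h : G.Adj x.1 x.2 <;> simp [h, mul_comm]

open Classical in
lemma energyFin_add (G : SimpleGraph V) [Fintype V] (θ η : V → V → ℝ) :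
    energyFin G (θ + η) = energyFin G θ + energyFin G η + inn G θ η := by
  rw [energyFin_eq_inn, energyFin_eq_inn, energyFin_eq_inn, inn, inn, inn, inn]
  rw [show ∀ a b c d : ℝ, 2⁻¹*a = 2⁻¹*b + 2⁻¹*c + d ↔ a = b + c + 2*d from by intros; constructor <;> intro <;> linarith]
  rw [Finset.mul_sum, ← Finset.sum_add_distrib, ← Finset.sum_add_distrib]
  apply Finset.sum_congr rfl
  intro x _
  by_cases h : G.Adj x.1 x.2 <;> simp [h] <;> ring

open Classical in
lemma inn_congr_adj (G : SimpleGraph V) [Fintype V] {θ θ' : V → V → ℝ} (η : V → V → ℝ)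
    (h : ∀ x y, G.Adj x y → θ x y = θ' x y) : inn G θ η = inn G θ' η := by
  rw [inn, inn]
  apply Finset.sum_congr rfl
  intro x _
  by_cases hx : G.Adj x.1 x.2
  · rw [if_pos hx, if_pos hx, h _ _ hx]
  · rw [if_neg hx, if_neg hx]

open Classical in
lemma inn_pot (G : SimpleGraph V) [Fintype V] [G.LocallyFinite] (φ : V → ℝ) (c : V → V → ℝ)
    (hc : ∀ x y, c x y = - c y x) :
    inn G (fun x y => φ x - φ y) c = 2 * ∑ x : V, φ x * divg G c x := by
  have hdig : ∀ x, divg G c x = ∑ y : V, if G.Adj x y then c x y else 0 := by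
    intro x
    rw [divg, show (∑ y : V, if G.Adj x y then c x y else 0)
        = ∑ y ∈ Finset.univ.filter (fun y => G.Adj x y), c x y from (Finset.sum_filter _ _).symm]
    apply Finset.sum_congr
    · ext y; simp [SimpleGraph.mem_neighborFinset]
    · intros; rfl
  have key : inn G (fun x y => φ x - φ y) c
      = (∑ x : V × V, if G.Adj x.1 x.2 then φ x.1 * c x.1 x.2 else 0)
        - ∑ x : V × V, if G.Adj x.1 x.2 then φ x.2 * c x.1 x.2 else 0 := by
    rw [inn, ← Finset.sum_sub_distrib]
    apply Finset.sum_congr rfl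
    intro x _
    by_cases h : G.Adj x.1 x.2 <;> simp [h] <;> ring
  have swap : (∑ x : V × V, if G.Adj x.1 x.2 then φ x.2 * c x.1 x.2 else 0)
      = - ∑ x : V × V, if G.Adj x.1 x.2 then φ x.1 * c x.1 x.2 else 0 := by
    have hcomp : ∀ x : V × V, (if G.Adj x.1 x.2 then φ x.2 * c x.1 x.2 else 0)
        = (fun z : V × V => -(if G.Adj z.1 z.2 then φ z.1 * c z.1 z.2 else 0))
          ((Equiv.prodComm V V) x) := by
      intro x
      by_cases h : G.Adj x.1 x.2
      · simp only [Equiv.prodComm_apply, Prod.fst_swap, Prod.snd_swap, if_pos h,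
          h.symm, if_true]
        rw [hc x.2 x.1]; ring
      · have h' : ¬G.Adj x.2 x.1 := fun hh => h hh.symm
        simp only [Equiv.prodComm_apply, Prod.fst_swap, Prod.snd_swap, if_neg h,
          h', if_false, neg_zero]
    rw [Fintype.sum_equiv (Equiv.prodComm V V) _
      (fun z : V × V => -(if G.Adj z.1 z.2 then φ z.1 * c z.1 z.2 else 0)) hcomp]
    rw [Finset.sum_neg_distrib]
  rw [key, swap]
  rw [show ∀ a : ℝ, a - -a = 2 * a from fun a => by ring]
  rw [Fintype.sum_prod_type]
  congr 1
  apply Finset.sum_congr rfl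
  intro x _
  rw [hdig, Finset.mul_sum]
  apply Finset.sum_congr rfl
  intro y _
  by_cases h : G.Adj x y <;> simp [h]


/-- ordered dart membership in a walk -/
def DartMem {G : SimpleGraph V} {a b : V} (p : G.Walk a b) (x y : V) : Prop :=
  ∃ d ∈ p.darts, d.toProd = (x, y)

lemma DartMem.adj {G : SimpleGraph V} {a b : V} {p : G.Walk a b} {x y : V}
    (h : DartMem p x y) : G.Adj x y := by
  obtain ⟨d, _, hd⟩ := h
  have := d.adj
  rwa [show d.toProd.1 = x from by rw [hd], show d.toProd.2 = y from by rw [hd]] at this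

lemma DartMem.edge_mem {G : SimpleGraph V} {a b : V} {p : G.Walk a b} {x y : V}
    (h : DartMem p x y) : s(x, y) ∈ p.edges := by
  obtain ⟨d, hdm, hd⟩ := h
  have : d.edge = s(x, y) := by rw [SimpleGraph.Dart.edge, hd]
  rw [← this]
  exact List.mem_map_of_mem hdm

lemma dartMem_nil {G : SimpleGraph V} {a x y : V} :
    ¬ DartMem (SimpleGraph.Walk.nil : G.Walk a a) x y := by
  rintro ⟨d, hd, -⟩
  simp [SimpleGraph.Walk.darts_nil] at hd

lemma dartMem_cons_iff {G : SimpleGraph V} {a c b x y : V} (h : G.Adj a c) (p : G.Walk c b) :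
    DartMem (SimpleGraph.Walk.cons h p) x y ↔ (a = x ∧ c = y) ∨ DartMem p x y := by
  constructor
  · rintro ⟨d, hd, hdp⟩
    rw [SimpleGraph.Walk.darts_cons, List.mem_cons] at hd
    rcases hd with rfl | hd
    · left
      have : (a, c) = (x, y) := hdp
      exact ⟨congrArg Prod.fst this, congrArg Prod.snd this⟩
    · right; exact ⟨d, hd, hdp⟩
  · rintro (⟨rfl, rfl⟩ | ⟨d, hd, hdp⟩)
    · exact ⟨_, by rw [SimpleGraph.Walk.darts_cons]; exact List.mem_cons_self, rfl⟩
    · exact ⟨d, by rw [SimpleGraph.Walk.darts_cons]; exact List.mem_cons_of_mem _ hd, hdp⟩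


open Classical in
lemma wflow_val {G : SimpleGraph V} {a b : V} (p : G.Walk a b) (hp : p.IsTrail) (x y : V) :
    wflow p x y = (if DartMem p x y then 1 else 0) - (if DartMem p y x then 1 else 0) := by
  induction p with
  | nil => simp [wflow_nil, dartMem_nil]
  | @cons a c b h q ih =>
    rw [SimpleGraph.Walk.isTrail_cons] at hp
    obtain ⟨hq, he⟩ := hp
    rw [wflow_cons]
    simp only [Pi.add_apply]
    rw [ih hq]
    by_cases c1 : a = x ∧ c = y
    · obtain ⟨rfl, rfl⟩ := c1
      have hu : uflow a c a c = 1 := by simp [uflow, h.ne]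
      have nd1 : ¬ DartMem q a c := fun hd => he hd.edge_mem
      have nd2 : ¬ DartMem q c a := fun hd => he (Sym2.eq_swap ▸ hd.edge_mem)
      have m1 : DartMem (SimpleGraph.Walk.cons h q) a c := by
        rw [dartMem_cons_iff]; exact Or.inl ⟨rfl, rfl⟩
      have m2 : ¬ DartMem (SimpleGraph.Walk.cons h q) c a := by
        rw [dartMem_cons_iff]
        rintro (⟨rfl, hh⟩ | hd)
        · exact h.ne hh.symm
        · exact nd2 hd
      rw [if_pos m1, if_neg m2, if_neg nd1, if_neg nd2, hu]
      norm_num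
    · by_cases c2 : a = y ∧ c = x
      · obtain ⟨rfl, rfl⟩ := c2
        have hu : uflow a c c a = -1 := by simp [uflow, h.ne, Ne.symm h.ne]
        have nd1 : ¬ DartMem q c a := fun hd => he (Sym2.eq_swap ▸ hd.edge_mem)
        have nd2 : ¬ DartMem q a c := fun hd => he hd.edge_mem
        have m1 : ¬ DartMem (SimpleGraph.Walk.cons h q) c a := by
          rw [dartMem_cons_iff]
          rintro (⟨rfl, hh⟩ | hd)
          · exact h.ne hh
          · exact nd1 hd
        have m2 : DartMem (SimpleGraph.Walk.cons h q) a c := by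
          rw [dartMem_cons_iff]; exact Or.inl ⟨rfl, rfl⟩
        rw [if_neg m1, if_pos m2, if_neg nd1, if_neg nd2, hu]
        norm_num
      · have hu : uflow a c x y = 0 := by
          rw [uflow]
          rw [if_neg (fun hh : x = a ∧ y = c => c1 ⟨hh.1.symm, hh.2.symm⟩),
            if_neg (fun hh : x = c ∧ y = a => c2 ⟨hh.2.symm, hh.1.symm⟩)]
          norm_num
        have m1 : DartMem (SimpleGraph.Walk.cons h q) x y ↔ DartMem q x y := by
          rw [dartMem_cons_iff]
          constructor
          · rintro (hh | hd)
            · exact absurd hh c1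
            · exact hd
          · exact Or.inr
        have m2 : DartMem (SimpleGraph.Walk.cons h q) y x ↔ DartMem q y x := by
          rw [dartMem_cons_iff]
          constructor
          · rintro (⟨rfl, rfl⟩ | hd)
            · exact absurd ⟨rfl, rfl⟩ c2
            · exact hd
          · exact Or.inr
        rw [hu]
        simp only [m1, m2]
        ring

lemma split_at_dart {G : SimpleGraph V} {a b : V} (p : G.Walk a b) (hp : p.IsPath) {x y : V}
    (hd : DartMem p x y) :
    (∃ q : G.Walk a x, s(x, y) ∉ q.edges) ∧ (∃ r : G.Walk y b, s(x, y) ∉ r.edges) := by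
  induction p with
  | nil => exact absurd hd dartMem_nil
  | @cons a c b h q ih =>
    have hq : q.IsPath := hp.of_cons
    have he : s(a, c) ∉ q.edges := (SimpleGraph.Walk.isTrail_cons h q).mp hp.isTrail |>.2
    rw [dartMem_cons_iff] at hd
    rcases hd with ⟨rfl, rfl⟩ | hd
    · exact ⟨⟨SimpleGraph.Walk.nil, by simp⟩, ⟨q, he⟩⟩
    · obtain ⟨⟨q', hq'⟩, ⟨r', hr'⟩⟩ := ih hq hd
      have hne : s(x, y) ≠ s(a, c) := by
        intro hh
        exact he (hh ▸ hd.edge_mem)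
      refine ⟨⟨SimpleGraph.Walk.cons h q', ?_⟩, ⟨r', hr'⟩⟩
      rw [SimpleGraph.Walk.edges_cons, List.mem_cons]
      rintro (hh | hh)
      · exact hne hh
      · exact hq' hh

lemma reach_dichotomy_walk {G : SimpleGraph V} {x y : V} {a b : V} (p : G.Walk a b)
    (ha : (G.deleteEdges {s(x, y)}).Reachable x a ∨ (G.deleteEdges {s(x, y)}).Reachable y a) :
    (G.deleteEdges {s(x, y)}).Reachable x b ∨ (G.deleteEdges {s(x, y)}).Reachable y b := by
  induction p with
  | nil => exact ha
  | @cons a c b h q ih =>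
    apply ih
    by_cases hac : s(a, c) = s(x, y)
    · rw [Sym2.eq_iff] at hac
      rcases hac with ⟨rfl, rfl⟩ | ⟨rfl, rfl⟩
      · exact Or.inr (SimpleGraph.Reachable.refl _)
      · exact Or.inl (SimpleGraph.Reachable.refl _)
    · have hadj : (G.deleteEdges {s(x, y)}).Adj a c := by
        rw [SimpleGraph.deleteEdges_adj]
        exact ⟨h, by simpa using hac⟩
      rcases ha with ha | ha
      · exact Or.inl (ha.trans hadj.reachable)
      · exact Or.inr (ha.trans hadj.reachable)

lemma reach_dichotomy {G : SimpleGraph V} (hG : G.Connected) {x y : V} (w : V) :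
    (G.deleteEdges {s(x, y)}).Reachable x w ∨ (G.deleteEdges {s(x, y)}).Reachable y w := by
  obtain ⟨p⟩ := hG.preconnected x w
  exact reach_dichotomy_walk p (Or.inl (SimpleGraph.Reachable.refl _))

lemma connected_deleteEdges_of_cycle {G : SimpleGraph V} (hG : G.Connected) {v : V}
    {c : G.Walk v v} (hc : c.IsCycle) {x y : V} (he : s(x, y) ∈ c.edges) :
    (G.deleteEdges {s(x, y)}).Connected := by
  have hadj_reach := SimpleGraph.adj_and_reachable_delete_edges_iff_exists_cycle.mpr ⟨v, c, hc, he⟩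
  have hxy : (G.deleteEdges {s(x, y)}).Reachable x y := hadj_reach.2
  rw [SimpleGraph.connected_iff]
  refine ⟨fun w w' => ?_, hG.nonempty⟩
  have h1 := reach_dichotomy hG (x := x) (y := y) w
  have h2 := reach_dichotomy hG (x := x) (y := y) w'
  rcases h1 with h1 | h1 <;> rcases h2 with h2 | h2
  · exact h1.symm.trans h2
  · exact h1.symm.trans (hxy.trans h2)
  · exact h1.symm.trans (hxy.symm.trans h2)
  · exact h1.symm.trans h2

lemma exists_spanning_tree [Fintype V] (G : SimpleGraph V) (hG : G.Connected) :
    ∃ T ≤ G, T.IsTree := by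
  classical
  obtain ⟨n, hn⟩ : ∃ n, G.edgeSet.ncard = n := ⟨_, rfl⟩
  induction n using Nat.strong_induction_on generalizing G with
  | _ n ih =>
    by_cases hac : G.IsAcyclic
    · exact ⟨G, le_refl G, ⟨hG, hac⟩⟩
    · rw [SimpleGraph.IsAcyclic] at hac
      push_neg at hac
      obtain ⟨v, c, hc⟩ := hac
      cases c with
      | nil => exact absurd rfl hc.ne_nil
      | @cons v w _ h q =>
        have he : s(v, w) ∈ (SimpleGraph.Walk.cons h q).edges := by
          rw [SimpleGraph.Walk.edges_cons]; exact List.mem_cons_self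
        have hconn' := connected_deleteEdges_of_cycle hG hc he
        have hcard : (G.deleteEdges {s(v, w)}).edgeSet.ncard < n := by
          rw [SimpleGraph.edgeSet_deleteEdges, ← hn]
          exact Set.ncard_diff_singleton_lt_of_mem ((SimpleGraph.mem_edgeSet G).mpr h) (Set.toFinite _)
        obtain ⟨T, hT1, hT2⟩ := ih _ hcard _ hconn' rfl
        exact ⟨T, hT1.trans (SimpleGraph.deleteEdges_le _), hT2⟩

lemma isAcyclic_mono {H T : SimpleGraph V} (h : H ≤ T) (hT : T.IsAcyclic) : H.IsAcyclic := by
  intro w c hc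
  exact hT (c.mapLe h) (hc.mapLe h)

lemma edges_mapLe {H T : SimpleGraph V} (h : H ≤ T) {a b : V} (p : H.Walk a b) :
    (p.mapLe h).edges = p.edges := by
  rw [SimpleGraph.Walk.mapLe, SimpleGraph.Walk.edges_map]
  have hid : Sym2.map ⇑(SimpleGraph.Hom.ofLE h) = id := by
    funext e
    refine Sym2.ind (fun a b => ?_) e
    simp [SimpleGraph.Hom.ofLE_apply]
  rw [hid, List.map_id]

lemma sup_delete_eq {T : SimpleGraph V} {x y : V} (h : T.Adj x y) :
    T.deleteEdges {s(x, y)} ⊔ SimpleGraph.fromEdgeSet {s(x, y)} = T := by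
  ext a b
  simp only [SimpleGraph.sup_adj, SimpleGraph.deleteEdges_adj, SimpleGraph.fromEdgeSet_adj,
    Set.mem_singleton_iff]
  constructor
  · rintro (⟨ha, -⟩ | ⟨he, -⟩)
    · exact ha
    · rw [Sym2.eq_iff] at he
      rcases he with ⟨rfl, rfl⟩ | ⟨rfl, rfl⟩
      · exact h
      · exact h.symm
  · intro ha
    by_cases he : s(a, b) = s(x, y)
    · exact Or.inr ⟨he, ha.ne⟩
    · exact Or.inl ⟨ha, he⟩

lemma delete_sup_eq {F : SimpleGraph V} {x y : V} (hxy : x ≠ y) (h : ¬F.Adj x y) :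
    (F ⊔ SimpleGraph.fromEdgeSet {s(x, y)}).deleteEdges {s(x, y)} = F := by
  ext a b
  simp only [SimpleGraph.deleteEdges_adj, SimpleGraph.sup_adj, SimpleGraph.fromEdgeSet_adj,
    Set.mem_singleton_iff]
  constructor
  · rintro ⟨ha | ⟨he, -⟩, hne⟩
    · exact ha
    · exact absurd he hne
  · intro ha
    refine ⟨Or.inl ha, fun he => ?_⟩
    rw [Sym2.eq_iff] at he
    rcases he with ⟨rfl, rfl⟩ | ⟨rfl, rfl⟩
    · exact h ha
    · exact h ha.symm

/-- The canonical path between two vertices of a tree. -/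
noncomputable def tpath {T : SimpleGraph V} (hT : T.IsTree) (a b : V) : T.Walk a b :=
  (hT.existsUnique_path a b).choose

lemma tpath_isPath {T : SimpleGraph V} (hT : T.IsTree) (a b : V) : (tpath hT a b).IsPath :=
  (hT.existsUnique_path a b).choose_spec.1

lemma tpath_unique {T : SimpleGraph V} (hT : T.IsTree) {a b : V} (p : T.Walk a b)
    (hp : p.IsPath) : p = tpath hT a b :=
  (hT.existsUnique_path a b).choose_spec.2 p hp

section Bij
variable [Fintype V] [DecidableEq V]

/-- 2-component spanning forests separating `u` from `v`. -/
def SepF (G : SimpleGraph V) (u v : V) (F : SimpleGraph V) : Prop :=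
  F ≤ G ∧ F.IsAcyclic ∧ ¬F.Reachable u v ∧ ∀ w, F.Reachable u w ∨ F.Reachable v w

open Classical in
noncomputable def Qset (G : SimpleGraph V) (u v x : V) : Finset (SimpleGraph V) :=
  Finset.univ.filter (fun F => SepF G u v F ∧ F.Reachable u x)

open Classical in
noncomputable def Rset (G : SimpleGraph V) (u v x y : V) : Finset (SimpleGraph V) :=
  Finset.univ.filter (fun F => SepF G u v F ∧ F.Reachable u x ∧ F.Reachable v y)

/-- the canonical `u`–`v` path in the tree `T` traverses the dart `(x, y)` -/
def TreeDart (u v x y : V) (T : SimpleGraph V) : Prop :=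
  ∃ hT : T.IsTree, DartMem (tpath hT u v) x y

open Classical in
noncomputable def Pset (G : SimpleGraph V) (u v x y : V) : Finset (SimpleGraph V) :=
  Finset.univ.filter (fun T => (T ≤ G ∧ T.IsTree) ∧ TreeDart u v x y T)

lemma fwd_mem {G T : SimpleGraph V} {u v x y : V} (hTG : T ≤ G) (hT : T.IsTree)
    (hd : DartMem (tpath hT u v) x y) :
    SepF G u v (T.deleteEdges {s(x, y)}) ∧ (T.deleteEdges {s(x, y)}).Reachable u x ∧
      (T.deleteEdges {s(x, y)}).Reachable v y := by
  have hxyT : T.Adj x y := hd.adj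
  have FleT : T.deleteEdges {s(x, y)} ≤ T := SimpleGraph.deleteEdges_le _
  obtain ⟨⟨q, hq⟩, ⟨r, hr⟩⟩ := split_at_dart _ (tpath_isPath hT u v) hd
  have hux : (T.deleteEdges {s(x, y)}).Reachable u x :=
    ⟨q.toDeleteEdges _ (fun e he hee => hq (by rwa [Set.mem_singleton_iff] at hee ▸ he))⟩
  have hyv : (T.deleteEdges {s(x, y)}).Reachable y v :=
    ⟨r.toDeleteEdges _ (fun e he hee => hr (by rwa [Set.mem_singleton_iff] at hee ▸ he))⟩
  have hnuv : ¬(T.deleteEdges {s(x, y)}).Reachable u v := by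
    intro hre
    obtain ⟨w0⟩ := hre
    have hpF : (w0.toPath : (T.deleteEdges {s(x, y)}).Walk u v).IsPath := w0.toPath.2
    have hpT : ((w0.toPath : (T.deleteEdges {s(x, y)}).Walk u v).mapLe FleT).IsPath :=
      hpF.mapLe FleT
    have hEq := tpath_unique hT _ hpT
    have hedge : s(x, y) ∈ ((w0.toPath : (T.deleteEdges {s(x, y)}).Walk u v).mapLe FleT).edges := by
      rw [hEq]; exact hd.edge_mem
    rw [edges_mapLe] at hedge
    have := (w0.toPath : (T.deleteEdges {s(x, y)}).Walk u v).edges_subset_edgeSet hedge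
    rw [SimpleGraph.edgeSet_deleteEdges] at this
    exact this.2 rfl
  refine ⟨⟨FleT.trans hTG, isAcyclic_mono FleT hT.2, hnuv, fun w => ?_⟩, hux, hyv.symm⟩
  rcases reach_dichotomy hT.1 (x := x) (y := y) w with hw | hw
  · exact Or.inl (hux.trans hw)
  · exact Or.inr (hyv.symm.trans hw)

lemma bwd_mem {G F : SimpleGraph V} {u v x y : V} (hGxy : G.Adj x y) (hF : SepF G u v F)
    (hux : F.Reachable u x) (hvy : F.Reachable v y) :
    ∃ (hle : F ⊔ SimpleGraph.fromEdgeSet {s(x, y)} ≤ G)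
      (hT : (F ⊔ SimpleGraph.fromEdgeSet {s(x, y)}).IsTree),
      DartMem (tpath hT u v) x y ∧
        (F ⊔ SimpleGraph.fromEdgeSet {s(x, y)}).deleteEdges {s(x, y)} = F := by
  obtain ⟨hFG, hFac, hFnuv, hFdich⟩ := hF
  set T := F ⊔ SimpleGraph.fromEdgeSet {s(x, y)} with hTdef
  have hnFxy : ¬F.Adj x y := by
    intro hh
    exact hFnuv (hux.trans (hh.reachable.trans hvy.symm))
  have hTF : F ≤ T := le_sup_left
  have hTxy : T.Adj x y := by
    rw [hTdef, SimpleGraph.sup_adj, SimpleGraph.fromEdgeSet_adj]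
    exact Or.inr ⟨rfl, hGxy.ne⟩
  have hdel : T.deleteEdges {s(x, y)} = F := delete_sup_eq hGxy.ne hnFxy
  have hle : T ≤ G := by
    rw [hTdef]
    refine sup_le hFG ?_
    intro a b hab
    rw [SimpleGraph.fromEdgeSet_adj, Set.mem_singleton_iff, Sym2.eq_iff] at hab
    rcases hab.1 with ⟨rfl, rfl⟩ | ⟨rfl, rfl⟩
    · exact hGxy
    · exact hGxy.symm
  have hconn : T.Connected := by
    rw [SimpleGraph.connected_iff]
    refine ⟨fun w w' => ?_, ⟨u⟩⟩
    have key : ∀ z, T.Reachable u z := by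
      intro z
      rcases hFdich z with hz | hz
      · exact hz.mono hTF
      · exact ((hux.mono hTF).trans hTxy.reachable).trans
          ((hvy.symm.mono hTF).trans (hz.mono hTF))
    exact (key w).symm.trans (key w')
  have hacyc : T.IsAcyclic := by
    intro w c hc
    by_cases he : s(x, y) ∈ c.edges
    · have hreach := (SimpleGraph.adj_and_reachable_delete_edges_iff_exists_cycle.mpr
        ⟨w, c, hc, he⟩).2
      have : (T.deleteEdges {s(x, y)}).Reachable x y := hreach
      rw [hdel] at this
      exact hFnuv (hux.trans (this.trans hvy.symm))
    · have hsub : ∀ e ∈ c.edges, e ∈ F.edgeSet := by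
        intro e hee
        have heT := c.edges_subset_edgeSet hee
        have : e ∈ (T.deleteEdges {s(x, y)}).edgeSet := by
          rw [SimpleGraph.edgeSet_deleteEdges]
          exact ⟨heT, fun h0 => he (h0 ▸ hee)⟩
        rw [hdel] at this
        exact this
      exact hFac _ (hc.transfer hsub)
  have hT : T.IsTree := ⟨hconn, hacyc⟩
  refine ⟨hle, hT, ?_, hdel⟩
  -- the canonical path must use the edge s(x,y), in the direction (x,y)
  have hemem : s(x, y) ∈ (tpath hT u v).edges := by
    by_contra hne
    have hsub : ∀ e ∈ (tpath hT u v).edges, e ∉ ({s(x, y)} : Set (Sym2 V)) := by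
      intro e hee h0
      rw [Set.mem_singleton_iff] at h0
      exact hne (h0 ▸ hee)
    have : (T.deleteEdges {s(x, y)}).Reachable u v := ⟨(tpath hT u v).toDeleteEdges _ hsub⟩
    rw [hdel] at this
    exact hFnuv this
  -- get the dart
  rw [SimpleGraph.Walk.edges, List.mem_map] at hemem
  obtain ⟨d, hdm, hde⟩ := hemem
  have hdor : d.toProd = (x, y) ∨ d.toProd = (y, x) := by
    have := (SimpleGraph.dart_edge_eq_mk'_iff (d := d) (u := x) (v := y)).mp hde
    rcases this with h0 | h0
    · exact Or.inl h0
    · exact Or.inr h0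
  rcases hdor with h0 | h0
  · exact ⟨d, hdm, h0⟩
  · exfalso
    have hdm' : DartMem (tpath hT u v) y x := ⟨d, hdm, h0⟩
    obtain ⟨⟨q, hq⟩, ⟨r, hr⟩⟩ := split_at_dart _ (tpath_isPath hT u v) hdm'
    -- q : T.Walk u y avoiding s(y,x), r : T.Walk x v avoiding s(y,x)
    have hq' : ∀ e ∈ q.edges, e ∉ ({s(x, y)} : Set (Sym2 V)) := by
      intro e hee h0'
      rw [Set.mem_singleton_iff] at h0'
      exact hq (by rw [Sym2.eq_swap] at h0'; exact h0' ▸ hee)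
    have hr' : ∀ e ∈ r.edges, e ∉ ({s(x, y)} : Set (Sym2 V)) := by
      intro e hee h0'
      rw [Set.mem_singleton_iff] at h0'
      exact hr (by rw [Sym2.eq_swap] at h0'; exact h0' ▸ hee)
    have huy : F.Reachable u y := by
      have : (T.deleteEdges {s(x, y)}).Reachable u y := ⟨q.toDeleteEdges _ hq'⟩
      rwa [hdel] at this
    exact hFnuv (huy.trans hvy.symm)

end Bij

section Count
variable [Fintype V] [DecidableEq V]

open Classical in
noncomputable def treeSet (G : SimpleGraph V) : Finset (SimpleGraph V) :=
  Finset.univ.filter (fun H => H ≤ G ∧ H.IsTree)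

open Classical in
lemma mem_treeSet_iff {G H : SimpleGraph V} : H ∈ treeSet G ↔ H ≤ G ∧ H.IsTree := by
  simp [treeSet]

open Classical in
noncomputable def tflow (u v : V) (T : SimpleGraph V) : V → V → ℝ :=
  if hT : T.IsTree then wflow (tpath hT u v) else 0

lemma card_Pset_eq_card_Rset {G : SimpleGraph V} {u v x y : V} (hGxy : G.Adj x y) :
    (Pset G u v x y).card = (Rset G u v x y).card := by
  classical
  apply Finset.card_bij (fun T _ => T.deleteEdges {s(x, y)})
  · rintro T hT
    rw [Pset, Finset.mem_filter] at hT
    obtain ⟨-, ⟨hTG, hTree⟩, hTree', hdart⟩ := hT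
    obtain ⟨h1, h2, h3⟩ := fwd_mem hTG hTree' hdart
    rw [Rset, Finset.mem_filter]
    exact ⟨Finset.mem_univ _, h1, h2, h3⟩
  · rintro T₁ hT₁ T₂ hT₂ heq
    rw [Pset, Finset.mem_filter] at hT₁ hT₂
    obtain ⟨-, -, hT1, hd1⟩ := hT₁
    obtain ⟨-, -, hT2, hd2⟩ := hT₂
    have a1 : T₁.Adj x y := hd1.adj
    have a2 : T₂.Adj x y := hd2.adj
    rw [← sup_delete_eq a1, ← sup_delete_eq a2, heq]
  · rintro F hF
    rw [Rset, Finset.mem_filter] at hF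
    obtain ⟨-, hSep, hux, hvy⟩ := hF
    obtain ⟨hle, hT, hdart, hdel⟩ := bwd_mem hGxy hSep hux hvy
    refine ⟨F ⊔ SimpleGraph.fromEdgeSet {s(x, y)}, ?_, hdel⟩
    rw [Pset, Finset.mem_filter]
    exact ⟨Finset.mem_univ _, ⟨hle, hT⟩, ⟨hT, hdart⟩⟩

open Classical in
lemma Rset_eq_sdiff {G : SimpleGraph V} {u v x y : V} :
    Rset G u v x y = Qset G u v x \ Qset G u v y := by
  classical
  ext F
  rw [Rset, Finset.mem_sdiff, Qset, Qset, Finset.mem_filter, Finset.mem_filter,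
    Finset.mem_filter]
  constructor
  · rintro ⟨hu, hSep, hux, hvy⟩
    refine ⟨⟨hu, hSep, hux⟩, ?_⟩
    rintro ⟨-, -, huy⟩
    exact hSep.2.2.1 (huy.trans hvy.symm)
  · rintro ⟨⟨hu, hSep, hux⟩, hnot⟩
    refine ⟨hu, hSep, hux, ?_⟩
    rcases hSep.2.2.2 y with hy | hy
    · exact absurd ⟨hu, hSep, hy⟩ hnot
    · exact hy

open Classical in
lemma card_Qset_sub {G : SimpleGraph V} {u v x y : V} :
    ((Qset G u v x).card : ℝ) - (Qset G u v y).card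
      = ((Rset G u v x y).card : ℝ) - (Rset G u v y x).card := by
  classical
  have h1 := Finset.card_sdiff_add_card_inter (Qset G u v x) (Qset G u v y)
  have h2 := Finset.card_sdiff_add_card_inter (Qset G u v y) (Qset G u v x)
  rw [Finset.inter_comm] at h2
  rw [Rset_eq_sdiff, Rset_eq_sdiff]
  have e1 : ((Qset G u v x).card : ℝ)
      = ((Qset G u v x \ Qset G u v y).card : ℝ) + ((Qset G u v x ∩ Qset G u v y).card : ℝ) := by
    exact_mod_cast h1.symm
  have e2 : ((Qset G u v y).card : ℝ)
      = ((Qset G u v y \ Qset G u v x).card : ℝ) + ((Qset G u v x ∩ Qset G u v y).card : ℝ) := by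
    exact_mod_cast h2.symm
  rw [e1, e2]
  ring

open Classical in
lemma sum_tflow_eq {G : SimpleGraph V} (u v x y : V) :
    ∑ T ∈ treeSet G, tflow u v T x y
      = ((Pset G u v x y).card : ℝ) - ((Pset G u v y x).card : ℝ) := by
  have key : ∀ T ∈ treeSet G, tflow u v T x y
      = (if TreeDart u v x y T then (1:ℝ) else 0) - (if TreeDart u v y x T then (1:ℝ) else 0) := by
    intro T hT
    rw [mem_treeSet_iff] at hT
    obtain ⟨hTG, hTree⟩ := hT
    rw [tflow, dif_pos hTree, wflow_val _ (tpath_isPath hTree u v).isTrail]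
    have d1 : DartMem (tpath hTree u v) x y ↔ TreeDart u v x y T :=
      ⟨fun h => ⟨hTree, h⟩, fun ⟨hT', h⟩ => h⟩
    have d2 : DartMem (tpath hTree u v) y x ↔ TreeDart u v y x T :=
      ⟨fun h => ⟨hTree, h⟩, fun ⟨hT', h⟩ => h⟩
    rw [if_congr d1 rfl rfl, if_congr d2 rfl rfl]
  rw [Finset.sum_congr rfl key, Finset.sum_sub_distrib, Finset.sum_boole, Finset.sum_boole]
  have hP1 : Finset.filter (TreeDart u v x y) (treeSet G) = Pset G u v x y := by
    rw [treeSet, Pset, Finset.filter_filter]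
  have hP2 : Finset.filter (TreeDart u v y x) (treeSet G) = Pset G u v y x := by
    rw [treeSet, Pset, Finset.filter_filter]
  rw [hP1, hP2]

open Classical in
lemma sum_tflow_pot {G : SimpleGraph V} {u v x y : V} (hGxy : G.Adj x y) :
    ∑ T ∈ treeSet G, tflow u v T x y
      = ((Qset G u v x).card : ℝ) - ((Qset G u v y).card : ℝ) := by
  rw [sum_tflow_eq, card_Pset_eq_card_Rset hGxy, card_Pset_eq_card_Rset hGxy.symm,
    card_Qset_sub]

open Classical in
lemma tflow_uv {u v : V} (hne : u ≠ v) (T : SimpleGraph V) (hTree : T.IsTree) :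
    tflow u v T u v = if T.Adj u v then 1 else 0 := by
  rw [tflow, dif_pos hTree]
  by_cases hA : T.Adj u v
  · have hpath : (SimpleGraph.Walk.cons hA SimpleGraph.Walk.nil).IsPath := by
      rw [SimpleGraph.Walk.isPath_def]
      simp [hne]
    rw [← tpath_unique hTree _ hpath, wflow_cons, if_pos hA]
    simp only [Pi.add_apply, wflow_nil, Pi.zero_apply]
    simp [uflow, hne]
  · rw [wflow_eq_zero _ hA, if_neg hA]

end Count

lemma tflow_anti (u v : V) (T : SimpleGraph V) (x y : V) :
    tflow u v T x y = - tflow u v T y x := by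
  rw [tflow]
  split
  · exact wflow_anti _ x y
  · simp

lemma tflow_not_adj {G T : SimpleGraph V} (hTG : T ≤ G) (u v : V) {x y : V}
    (h : ¬G.Adj x y) : tflow u v T x y = 0 := by
  rw [tflow]
  split
  · exact wflow_eq_zero _ (fun hh => h (hTG hh))
  · simp

lemma tflow_divg [Fintype V] {G T : SimpleGraph V} [G.LocallyFinite] (hTG : T ≤ G)
    (hTree : T.IsTree) (u v : V) : divg G (tflow u v T) = D u v := by
  rw [tflow, dif_pos hTree]
  exact divg_wflow hTG _

lemma divg_sub [Fintype V] (G : SimpleGraph V) [G.LocallyFinite] (θ η : V → V → ℝ) :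
    divg G (fun x y => θ x y - η x y) = fun x => divg G θ x - divg G η x := by
  funext x
  simp only [divg, Finset.sum_sub_distrib]

open Classical in
lemma pointSource_eq_D {u v : V} (hne : u ≠ v) : pointSource u v = D u v := by
  funext w
  rw [pointSource, D]
  by_cases h1 : w = u
  · subst h1; simp [hne]
  · by_cases h2 : w = v <;> simp [h1, h2, Ne.symm hne]

open Classical in
lemma energy_eq_pot (G : SimpleGraph V) [Fintype V] [G.LocallyFinite] {θ : V → V → ℝ}
    {ψ : V → ℝ} {p q : V} (hanti : ∀ x y, θ x y = - θ y x)
    (hpot : ∀ x y, G.Adj x y → θ x y = ψ x - ψ y)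
    (hdiv : divg G θ = D p q) :
    energyFin G θ = ψ p - ψ q := by
  rw [energyFin_eq_inn, inn_congr_adj G θ hpot, inn_pot G ψ θ hanti, hdiv]
  have key : ∀ x : V, ψ x * D p q x = (if x = p then ψ x else 0) - (if x = q then ψ x else 0) := by
    intro x
    rw [D]
    by_cases h1 : x = p
    · subst h1
      by_cases h2 : x = q
      · subst h2; simp
      · simp [h2]
    · by_cases h2 : x = q
      · subst h2; simp [h1]
      · simp [h1, h2]
  rw [Finset.sum_congr rfl (fun x _ => key x), Finset.sum_sub_distrib,
    Finset.sum_ite_eq' Finset.univ p ψ, Finset.sum_ite_eq' Finset.univ q ψ]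
  simp only [Finset.mem_univ, if_pos]
  ring

end KirchhoffAux

open KirchhoffAux in
/-- **Kirchhoff's rule**: the effective resistance across an edge `{u,v}` of a finite
connected graph of unit resistors equals the probability that a uniformly random spanning
tree of `G` contains the edge `{u,v}`. -/
theorem kirchhoff_rule (G : SimpleGraph V) [Fintype V]
    (hconn : G.Connected) (u v : V) (huv : G.Adj u v) :
    effRes G u v =
      ({H : SimpleGraph V | H ≤ G ∧ H.IsTree ∧ H.Adj u v}.ncard : ℝ) /
        ({H : SimpleGraph V | H ≤ G ∧ H.IsTree}.ncard : ℝ) := by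
  classical
  have hne : u ≠ v := huv.ne
  obtain ⟨T₀, hT₀G, hT₀⟩ := exists_spanning_tree G hconn
  have hN0 : 0 < (treeSet G).card :=
    Finset.card_pos.mpr ⟨T₀, mem_treeSet_iff.mpr ⟨hT₀G, hT₀⟩⟩
  set N : ℕ := (treeSet G).card with hNdef
  have hNne : (N : ℝ) ≠ 0 := Nat.cast_ne_zero.mpr hN0.ne'
  set i : V → V → ℝ := fun x y => (N : ℝ)⁻¹ * ∑ T ∈ treeSet G, tflow u v T x y with hidef
  set ψ : V → ℝ := fun x => (N : ℝ)⁻¹ * ((Qset G u v x).card : ℝ) with hψdef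
  have hflow : IsFlow G i := by
    constructor
    · intro x y
      rw [hidef]
      simp only
      rw [Finset.sum_congr rfl (fun T _ => tflow_anti u v T x y), Finset.sum_neg_distrib]
      ring
    · intro x y hxy
      rw [hidef]; simp only
      rw [Finset.sum_congr rfl (fun T hT => tflow_not_adj (mem_treeSet_iff.mp hT).1 u v hxy)]
      simp
  have hdivD : divg G i = D u v := by
    funext x
    calc divg G i x = ∑ y ∈ G.neighborFinset x, (N:ℝ)⁻¹ * ∑ T ∈ treeSet G, tflow u v T x y := rfl
    _ = (N:ℝ)⁻¹ * ∑ y ∈ G.neighborFinset x, ∑ T ∈ treeSet G, tflow u v T x y := by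
        rw [Finset.mul_sum]
    _ = (N:ℝ)⁻¹ * ∑ T ∈ treeSet G, ∑ y ∈ G.neighborFinset x, tflow u v T x y := by
        rw [Finset.sum_comm]
    _ = (N:ℝ)⁻¹ * ∑ T ∈ treeSet G, D u v x := by
        congr 1
        apply Finset.sum_congr rfl
        intro T hT
        have hd := tflow_divg (mem_treeSet_iff.mp hT).1 (mem_treeSet_iff.mp hT).2 u v
        calc ∑ y ∈ G.neighborFinset x, tflow u v T x y = divg G (tflow u v T) x := rfl
        _ = D u v x := by rw [hd]
    _ = D u v x := by
        rw [Finset.sum_const, nsmul_eq_mul, ← hNdef, ← mul_assoc, inv_mul_cancel₀ hNne, one_mul]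
  have hdiv : divg G i = pointSource u v := hdivD.trans (pointSource_eq_D hne).symm
  have hpot : ∀ x y, G.Adj x y → i x y = ψ x - ψ y := by
    intro x y hxy
    rw [hidef, hψdef]; simp only
    rw [sum_tflow_pot hxy]
    ring
  have hEi : energyFin G i = ψ u - ψ v := energy_eq_pot G hflow.1 hpot hdivD
  have hEiv : energyFin G i = i u v := by rw [hEi, ← hpot u v huv]
  have hiuv : i u v = (N:ℝ)⁻¹ * (((treeSet G).filter (fun T => T.Adj u v)).card : ℝ) := by
    rw [hidef]; simp only
    congr 1
    rw [Finset.sum_congr rfl (fun T hT => tflow_uv hne T (mem_treeSet_iff.mp hT).2)]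
    rw [Finset.sum_boole]
  have hleast : IsLeast
      {x | ∃ θ, IsFlow G θ ∧ divg G θ = pointSource u v ∧ x = energyFin G θ}
      (energyFin G i) := by
    constructor
    · exact ⟨i, hflow, hdiv, rfl⟩
    · rintro x ⟨θ, hθflow, hθdiv, rfl⟩
      set c : V → V → ℝ := fun a b => θ a b - i a b with hcdef
      have hθeq : θ = i + c := by funext a b; simp [hcdef]
      have hcanti : ∀ a b, c a b = - c b a := by
        intro a b
        rw [hcdef]; simp only
        rw [hθflow.1 a b, hflow.1 a b]
        ring
      have hcdiv : divg G c = fun _ => 0 := by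
        rw [hcdef, divg_sub G θ i, hθdiv, hdiv]
        funext w; simp
      have hinn : inn G i c = 0 := by
        rw [inn_congr_adj G c hpot, inn_pot G ψ c hcanti, hcdiv]
        simp
      rw [hθeq, energyFin_add, hinn]
      have hc0 := energyFin_nonneg G c
      linarith
  rw [effRes, hleast.csInf_eq]
  have hset1 : {H : SimpleGraph V | H ≤ G ∧ H.IsTree ∧ H.Adj u v}
      = ↑((treeSet G).filter (fun H => H.Adj u v)) := by
    ext H
    simp only [Set.mem_setOf_eq, Finset.coe_filter, mem_treeSet_iff, Set.mem_setOf_eq]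
    tauto
  have hset2 : {H : SimpleGraph V | H ≤ G ∧ H.IsTree} = ↑(treeSet G) := by
    ext H; simp [mem_treeSet_iff]
  rw [hset1, hset2, Set.ncard_coe_finset, Set.ncard_coe_finset, hEiv, hiuv, ← hNdef]
  rw [inv_mul_eq_div]
end
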